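/- arXiv:2601.02592 — 2 statements merged into one kernel-verified Lean document; each statement's English description precedes it below -/
import Mathlib

section
/- Let g ≥ 2 and let (g_1, ..., g_k) be a tuple of positive integers with g_1 ≤ g_2 ≤ ... ≤ g_k, k ≥ 2, and g_1 + ... + g_k = g. Then the quantity d = Σ_{1 ≤ i < j ≤ k} g_i·g_j satisfies d ≤ 2g − 3 if and only if the tuple is one of (1, g−1), (1, 1, g−2), (2, g−2), or (3, 3). -/
lemma sum_Ioi_castSucc' {M : Type*} [AddCommMonoid M] {m : ℕ} (f : Fin (m+1) → M) (i : Fin m) :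
    ∑ j ∈ Finset.Ioi i.castSucc, f j = (∑ j ∈ Finset.Ioi i, f j.castSucc) + f (Fin.last m) := by
  rw [← Finset.filter_lt_eq_Ioi, ← Finset.filter_lt_eq_Ioi, Finset.sum_filter, Finset.sum_filter,
    Fin.sum_univ_castSucc (f := fun j => if i.castSucc < j then f j else 0)]
  simp [Fin.castSucc_lt_castSucc_iff, Fin.castSucc_lt_last]

lemma key_identity : ∀ {m : ℕ} (f : Fin m → ℕ),
    2 * (∑ i, ∑ j ∈ Finset.Ioi i, f i * f j) + ∑ i, f i ^ 2 = (∑ i, f i) ^ 2 := by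
  intro m
  induction m with
  | zero => intro f; simp
  | succ n ih =>
    intro f
    have h1 : ∑ i : Fin (n+1), ∑ j ∈ Finset.Ioi i, f i * f j
        = (∑ i : Fin n, ∑ j ∈ Finset.Ioi i, f i.castSucc * f j.castSucc)
          + (∑ i : Fin n, f i.castSucc) * f (Fin.last n) := by
      rw [Fin.sum_univ_castSucc (f := fun i => ∑ j ∈ Finset.Ioi i, f i * f j)]
      simp only [sum_Ioi_castSucc', Finset.sum_add_distrib]
      rw [Finset.sum_mul]
      have : Finset.Ioi (Fin.last n) = ∅ := by
        ext x; simp [Fin.lt_iff_val_lt_val, Fin.le_last, Nat.lt_irrefl]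
        exact Fin.le_last x
      rw [this]
      simp [add_assoc]
    rw [h1, Fin.sum_univ_castSucc (f := fun i => f i ^ 2), Fin.sum_univ_castSucc (f := f)]
    have := ih (fun i => f i.castSucc)
    ring_nf
    ring_nf at this
    omega

lemma dtwo (g : Fin 2 → ℕ) : (∑ i : Fin 2, ∑ j ∈ Finset.Ioi i, g i * g j) = g 0 * g 1 := by
  rw [Fin.sum_univ_two, show Finset.Ioi (0:Fin 2) = {1} from by decide,
    show Finset.Ioi (1:Fin 2) = ∅ from by decide]
  simp

lemma dthree (g : Fin 3 → ℕ) : (∑ i : Fin 3, ∑ j ∈ Finset.Ioi i, g i * g j)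
    = g 0 * g 1 + g 0 * g 2 + g 1 * g 2 := by
  rw [Fin.sum_univ_three, show Finset.Ioi (0:Fin 3) = {1,2} from by decide,
    show Finset.Ioi (1:Fin 3) = {2} from by decide,
    show Finset.Ioi (2:Fin 3) = ∅ from by decide]
  rw [Finset.sum_insert (by decide)]
  simp

lemma dfour (g : Fin 4 → ℕ) : (∑ i : Fin 4, ∑ j ∈ Finset.Ioi i, g i * g j)
    = g 0 * g 1 + g 0 * g 2 + g 0 * g 3 + g 1 * g 2 + g 1 * g 3 + g 2 * g 3 := by
  rw [Fin.sum_univ_four, show Finset.Ioi (0:Fin 4) = {1,2,3} from by decide,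
    show Finset.Ioi (1:Fin 4) = {2,3} from by decide,
    show Finset.Ioi (2:Fin 4) = {3} from by decide,
    show Finset.Ioi (3:Fin 4) = ∅ from by decide]
  rw [Finset.sum_insert (by decide), Finset.sum_insert (by decide), Finset.sum_insert (by decide)]
  simp
  ring

set_option maxHeartbeats 1000000 in
/-- Classification of tuples `(g_1,...,g_k)` (positive, sorted, summing to `g ≥ 2`)
with `∑_{i<j} g_i g_j ≤ 2g - 3`. -/
theorem stmt0 {k : ℕ} (g : Fin k → ℕ) (G : ℕ) (hk : 2 ≤ k) (hG : 2 ≤ G)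
    (hpos : ∀ i, 0 < g i) (hmono : Monotone g) (hsum : ∑ i, g i = G) :
    ((∑ i : Fin k, ∑ j ∈ Finset.Ioi i, g i * g j : ℕ) : ℤ) ≤ 2 * (G : ℤ) - 3 ↔
      (List.ofFn g = [1, G - 1] ∨ List.ofFn g = [1, 1, G - 2] ∨
       List.ofFn g = [2, G - 2] ∨ List.ofFn g = [3, 3]) := by
  constructor
  · intro h
    obtain ⟨m, rfl⟩ : ∃ m, k = m + 1 := ⟨k - 1, by omega⟩
    have hid := key_identity g
    have hsq : ∑ i, g i ^ 2 ≤ G * g (Fin.last m) := by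
      calc ∑ i, g i ^ 2 ≤ ∑ i, g i * g (Fin.last m) :=
            Finset.sum_le_sum (fun i _ => by
              have h1 := hmono (Fin.le_last i)
              have h2 := hpos i
              nlinarith)
        _ = G * g (Fin.last m) := by rw [← Finset.sum_mul, hsum]
    have hsm : m ≤ ∑ i : Fin m, g i.castSucc := by
      have := Finset.card_nsmul_le_sum (Finset.univ : Finset (Fin m))
        (fun i => g i.castSucc) 1 (fun i _ => hpos _)
      simpa using this
    have hGs : (∑ i : Fin m, g i.castSucc) + g (Fin.last m) = G := by
      rw [← hsum, Fin.sum_univ_castSucc]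
    have hd : 2 * (∑ i : Fin (m+1), ∑ j ∈ Finset.Ioi i, g i * g j) + 6 ≤ 4 * G := by
      omega
    have hm3 : m ≤ 3 := by
      by_contra hmc
      push_neg at hmc
      set s := ∑ i : Fin m, g i.castSucc with hs
      have hs4 : 4 ≤ s := by omega
      have h4 : 4 * G ≤ s * G := Nat.mul_le_mul_right G (by omega)
      have hGG : G * G = s * G + G * g (Fin.last m) := by rw [← hGs]; ring
      have hsq' : (∑ i : Fin (m+1), g i) ^ 2 = G * G := by rw [hsum]; ring
      linarith [hid, hsq, hd, h4, hGG, hsq']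
    obtain rfl | rfl | rfl : m = 1 ∨ m = 2 ∨ m = 3 := by omega
    · -- k = 2
      have hd2 := dtwo g
      rw [Fin.sum_univ_two] at hsum
      have hm01 := hmono (show (0:Fin 2) ≤ 1 from by decide)
      have hp0 := hpos 0
      rw [hd2] at h
      have hlist : List.ofFn g = [g 0, g 1] := rfl
      rw [hlist]
      simp only [List.cons.injEq, and_true, eq_self_iff_true]
      rcases Nat.lt_or_ge (g 0) 4 with h4 | h4
      · interval_cases h0 : (g 0) <;> omega
      · exfalso
        have h5 : (4:ℤ) ≤ (g 0 : ℤ) := by exact_mod_cast h4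
        have h6 : (g 0 : ℤ) ≤ g 1 := by exact_mod_cast hm01
        have h7 : ((g 0 : ℤ) + g 1) = G := by exact_mod_cast hsum
        push_cast at h
        nlinarith
    · -- k = 3
      have hd3 := dthree g
      rw [Fin.sum_univ_three] at hsum
      have hm01 := hmono (show (0:Fin 3) ≤ 1 from by decide)
      have hm12 := hmono (show (1:Fin 3) ≤ 2 from by decide)
      have hp0 := hpos 0
      rw [hd3] at h
      push_cast at h
      have h6 : ((g 0 : ℤ) + g 1 + g 2) = G := by exact_mod_cast hsum
      have hb1 : (1:ℤ) ≤ g 0 := by exact_mod_cast hp0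
      have hb2 : (g 0:ℤ) ≤ g 1 := by exact_mod_cast hm01
      have hb3 : (g 1:ℤ) ≤ g 2 := by exact_mod_cast hm12
      have hy : g 1 = 1 := by
        by_contra hy
        have hy2 : (2:ℤ) ≤ g 1 := by
          have : 1 ≤ g 1 := hpos 1
          have : g 1 ≠ 1 := hy
          have : 2 ≤ g 1 := by omega
          exact_mod_cast this
        rcases le_or_gt (2:ℤ) (g 0) with ha2 | ha2
        · nlinarith
        · have ha1 : (g 0 : ℤ) = 1 := by omega
          nlinarith
      have hx : g 0 = 1 := by omega
      have hlist : List.ofFn g = [g 0, g 1, g 2] := rfl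
      rw [hlist]
      simp only [List.cons.injEq, and_true, eq_self_iff_true]
      omega
    · -- k = 4 : contradiction
      exfalso
      have hd4 := dfour g
      rw [Fin.sum_univ_four] at hsum
      have hm01 := hmono (show (0:Fin 4) ≤ 1 from by decide)
      have hm12 := hmono (show (1:Fin 4) ≤ 2 from by decide)
      have hm23 := hmono (show (2:Fin 4) ≤ 3 from by decide)
      have hp0 := hpos 0
      rw [hd4] at h
      push_cast at h
      have h6 : ((g 0 : ℤ) + g 1 + g 2 + g 3) = G := by exact_mod_cast hsum
      have hb1 : (1:ℤ) ≤ g 0 := by exact_mod_cast hp0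
      have hb2 : (g 0:ℤ) ≤ g 1 := by exact_mod_cast hm01
      have hb3 : (g 1:ℤ) ≤ g 2 := by exact_mod_cast hm12
      have hb4 : (g 2:ℤ) ≤ g 3 := by exact_mod_cast hm23
      have key : ∀ a b c e GZ : ℤ, 1 ≤ a → a ≤ b → b ≤ c → c ≤ e →
          a + b + c + e = GZ → ¬ (a*b + a*c + a*e + b*c + b*e + c*e ≤ 2*GZ - 3) := by
        intro a b c e GZ ha hab hbc hce hG' hcon
        rcases le_or_gt 2 e with he2 | he2
        · nlinarith [mul_nonneg (by linarith : (0:ℤ) ≤ a - 1) (by linarith : (0:ℤ) ≤ b - 1),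
            mul_nonneg (by linarith : (0:ℤ) ≤ a + b + c - 2) (by linarith : (0:ℤ) ≤ e - 2),
            mul_nonneg (by linarith : (0:ℤ) ≤ a - 1) (by linarith : (0:ℤ) ≤ c - 1),
            mul_nonneg (by linarith : (0:ℤ) ≤ b - 1) (by linarith : (0:ℤ) ≤ c - 1)]
        · have e0 : a = 1 := by omega
          have e1 : b = 1 := by omega
          have e2 : c = 1 := by omega
          have e3 : e = 1 := by omega
          subst e0 e1 e2 e3
          omega
      exact key _ _ _ _ _ hb1 hb2 hb3 hb4 h6 h
  · intro h
    rcases h with h | h | h | h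
    · have hlen := congrArg List.length h
      simp at hlen
      subst hlen
      have hlist : List.ofFn g = [g 0, g 1] := rfl
      rw [hlist] at h
      simp only [List.cons.injEq, and_true, eq_self_iff_true] at h
      rw [dtwo g, Fin.sum_univ_two] at *
      obtain ⟨h0, h1⟩ := h
      rw [h0] at hsum ⊢
      push_cast
      omega
    · have hlen := congrArg List.length h
      simp at hlen
      subst hlen
      have hlist : List.ofFn g = [g 0, g 1, g 2] := rfl
      rw [hlist] at h
      simp only [List.cons.injEq, and_true, eq_self_iff_true] at h
      rw [dthree g, Fin.sum_univ_three] at *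
      obtain ⟨h0, h1, h2⟩ := h
      rw [h0, h1] at hsum ⊢
      push_cast
      omega
    · have hlen := congrArg List.length h
      simp at hlen
      subst hlen
      have hlist : List.ofFn g = [g 0, g 1] := rfl
      rw [hlist] at h
      simp only [List.cons.injEq, and_true, eq_self_iff_true] at h
      rw [dtwo g, Fin.sum_univ_two] at *
      obtain ⟨h0, h1⟩ := h
      rw [h0] at hsum ⊢
      push_cast
      omega
    · have hlen := congrArg List.length h
      simp at hlen
      subst hlen
      have hlist : List.ofFn g = [g 0, g 1] := rfl
      rw [hlist] at h
      simp only [List.cons.injEq, and_true, eq_self_iff_true] at h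
      rw [dtwo g, Fin.sum_univ_two] at *
      obtain ⟨h0, h1⟩ := h
      rw [h0, h1] at hsum ⊢
      push_cast
      omega
end

section
/- Let k ≥ 3 and let g_1 ≤ g_2 ≤ ... ≤ g_k be positive integers with g_1 = 1, g_2 ≥ 2, and sum g. Then Σ_{1 ≤ i < j ≤ k} g_i·g_j ≥ 3g − 7. -/
theorem aux3 {k : ℕ} (g : Fin k → ℕ) (G : ℕ) (hk : 3 ≤ k)
    (hmono : Monotone g)
    (h1 : g ⟨0, by linarith⟩ = 1) (h2 : 2 ≤ g ⟨1, by linarith⟩)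
    (hsum : ∑ i, g i = G) :
    3 * (G : ℤ) - 7 ≤ (∑ i : Fin k, ∑ j ∈ Finset.Ioi i, g i * g j : ℕ) := by
  have hk0 : 0 < k := by omega
  have hk1 : 1 < k := by omega
  have hk2 : 2 < k := by omega
  have h01 : (⟨0, hk0⟩ : Fin k) < ⟨1, hk1⟩ := by simp [Fin.lt_def]
  have h12 : (⟨1, hk1⟩ : Fin k) < ⟨2, hk2⟩ := by simp [Fin.lt_def]
  have hra : g ⟨1, hk1⟩ ≤ ∑ j ∈ Finset.Ioi (⟨1, hk1⟩ : Fin k), g j :=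
    le_trans (hmono h12.le)
      (Finset.single_le_sum (fun i _ => Nat.zero_le _) (Finset.mem_Ioi.mpr h12))
  have hsplit : ∑ j ∈ Finset.Ioi (⟨0, hk0⟩ : Fin k), g j
      = g ⟨1, hk1⟩ + ∑ j ∈ Finset.Ioi (⟨1, hk1⟩ : Fin k), g j := by
    rw [← Finset.add_sum_erase _ g (Finset.mem_Ioi.mpr h01)]
    congr 1
    apply Finset.sum_congr _ (fun _ _ => rfl)
    ext j
    simp only [Finset.mem_erase, Finset.mem_Ioi, Fin.lt_def, Fin.val_mk]
    rw [ne_eq, Fin.ext_iff]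
    simp only [Fin.val_mk]
    omega
  have hG : G = 1 + g ⟨1, hk1⟩ + ∑ j ∈ Finset.Ioi (⟨1, hk1⟩ : Fin k), g j := by
    rw [← hsum, ← Finset.add_sum_erase _ g (Finset.mem_univ (⟨0, hk0⟩ : Fin k))]
    have huniv : Finset.univ.erase (⟨0, hk0⟩ : Fin k)
        = Finset.Ioi (⟨0, hk0⟩ : Fin k) := by
      ext j
      simp only [Finset.mem_erase, Finset.mem_univ, and_true, Finset.mem_Ioi,
        Fin.lt_def, Fin.val_mk]
      rw [ne_eq, Fin.ext_iff]
      simp only [Fin.val_mk]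
      omega
    rw [h1, huniv, hsplit, add_assoc]
  have hne : (⟨1, hk1⟩ : Fin k) ≠ ⟨0, hk0⟩ := by simp [Fin.ext_iff]
  have hT : g ⟨0, hk0⟩ * (∑ j ∈ Finset.Ioi (⟨0, hk0⟩ : Fin k), g j)
      + g ⟨1, hk1⟩ * (∑ j ∈ Finset.Ioi (⟨1, hk1⟩ : Fin k), g j) ≤
      ∑ i : Fin k, ∑ j ∈ Finset.Ioi i, g i * g j := by
    rw [← Finset.add_sum_erase _ _ (Finset.mem_univ (⟨0, hk0⟩ : Fin k)),
        ← Finset.add_sum_erase _ _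
          (Finset.mem_erase.mpr ⟨hne, Finset.mem_univ (⟨1, hk1⟩ : Fin k)⟩)]
    simp only [← Finset.mul_sum]
    exact Nat.add_le_add_left (Nat.le_add_right _ _) _
  rw [h1, one_mul, hsplit] at hT
  set a := g (⟨1, hk1⟩ : Fin k) with ha
  set r := ∑ j ∈ Finset.Ioi (⟨1, hk1⟩ : Fin k), g j with hr
  have hcast : (a + r + a * r : ℤ)
      ≤ (∑ i : Fin k, ∑ j ∈ Finset.Ioi i, g i * g j : ℕ) := by exact_mod_cast hT
  have hG' : (G : ℤ) = 1 + a + r := by exact_mod_cast hG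
  have ha' : (2 : ℤ) ≤ a := by exact_mod_cast h2
  have hra' : (a : ℤ) ≤ r := by exact_mod_cast hra
  nlinarith [hcast, ha', hra']

/-- Case `g_1 = 1, g_2 ≥ 2, k ≥ 3`: the codimension is at least `3g - 7`. -/
theorem stmt3 {k : ℕ} (g : Fin k → ℕ) (G : ℕ) (hk : 3 ≤ k)
    (hpos : ∀ i, 0 < g i) (hmono : Monotone g)
    (h1 : g ⟨0, by omega⟩ = 1) (h2 : 2 ≤ g ⟨1, by omega⟩)
    (hsum : ∑ i, g i = G) :
    3 * (G : ℤ) - 7 ≤ (∑ i : Fin k, ∑ j ∈ Finset.Ioi i, g i * g j : ℕ) := by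
  exact aux3 g G hk hmono h1 h2 hsum
end
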